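/- Let G be a Birkhoff–von Neumann matching-covered graph. Then the integer lattice L(G) generated by the incidence vectors of perfect matchings of G equals lin(P(G)) ∩ ℤ^E; that is, every integral vector in the linear span of the perfect matchings is an integer linear combination of perfect matchings. -/

import Mathlib

open Classical Finset

noncomputable section

namespace PaperPM

variable {V : Type} [Fintype V] [DecidableEq V]

/-- `M` is (the edge set of) a perfect matching of `G`. -/
def IsPM (G : SimpleGraph V) (M : Finset (Sym2 V)) : Prop :=
  (M : Set (Sym2 V)) ⊆ G.edgeSet ∧ ∀ v : V, ∃! e, e ∈ M ∧ v ∈ e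

/-- `G` is matching-covered: every edge lies in a perfect matching. -/
def MatchingCovered (G : SimpleGraph V) : Prop :=
  ∀ e ∈ G.edgeSet, ∃ M, IsPM G M ∧ e ∈ M

/-- incidence (indicator) vector of a set of edges -/
def indVec (M : Finset (Sym2 V)) : Sym2 V → ℝ := fun e => if e ∈ M then 1 else 0

/-- the perfect matching polytope of `G` -/
def pmPolytope (G : SimpleGraph V) : Set (Sym2 V → ℝ) :=
  convexHull ℝ {x | ∃ M, IsPM G M ∧ x = indVec M}

/-- the cut `δ(X)`: edges of `G` with exactly one endpoint in `X` -/
def cutE (G : SimpleGraph V) (X : Set V) : Finset (Sym2 V) :=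
  Finset.univ.filter fun e =>
    e ∈ G.edgeSet ∧ ∃ u v : V, e = s(u, v) ∧ u ∈ X ∧ v ∉ X

/-- `x(A) = Σ_{a ∈ A} x_a` -/
def edgeSum (x : Sym2 V → ℝ) (A : Finset (Sym2 V)) : ℝ := ∑ e ∈ A, x e

/-- the face `P(G;C) = P(G) ∩ {x : x(δ(X)) = 1}` -/
def faceCut (G : SimpleGraph V) (X : Set V) : Set (Sym2 V → ℝ) :=
  {x ∈ pmPolytope G | edgeSum x (cutE G X) = 1}

/-- `δ(X)` is a tight cut -/
def TightCut (G : SimpleGraph V) (X : Set V) : Prop :=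
  Odd X.toFinset.card ∧ 1 < X.toFinset.card ∧ X.toFinset.card < Fintype.card V - 1 ∧
    ∀ M, IsPM G M → (M ∩ cutE G X).card = 1

/-- a brick: non-bipartite matching-covered graph without tight cuts -/
def IsBrick (G : SimpleGraph V) : Prop :=
  MatchingCovered G ∧ ¬ G.Colorable 2 ∧ ∀ X : Set V, ¬ TightCut G X

/-- dimension of a subset of `ℝ^{Sym2 V}` (affine dimension; `-1` for the empty set) -/
def polyDim (s : Set (Sym2 V → ℝ)) : ℤ :=
  if s = ∅ then -1 else (Module.finrank ℝ (vectorSpan ℝ s) : ℤ)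

/-- number of bricks in a tight cut decomposition of `G`, via the dimension
formula `dim P(G) = |E| − |V| + 1 − b(G)` of Naddef and Edmonds–Pulleyblank–Lovász. -/
def brickCount (G : SimpleGraph V) : ℤ :=
  (G.edgeFinset.card : ℤ) - Fintype.card V + 1 - polyDim (pmPolytope G)

/-- (the edge set of) a perfect matching of the contraction `G/X`, viewed inside `G`:
no edge inside `X`, exactly one cut edge (covering the contraction vertex), and every
vertex outside `X` covered exactly once. This keeps multiple parallel cut edges distinct. -/
def IsPMContr (G : SimpleGraph V) (X : Set V) (M : Finset (Sym2 V)) : Prop :=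
  (M : Set (Sym2 V)) ⊆ G.edgeSet ∧ (∀ e ∈ M, ¬ ∀ v ∈ e, v ∈ X) ∧
    (M ∩ cutE G X).card = 1 ∧ ∀ v : V, v ∉ X → ∃! e, e ∈ M ∧ v ∈ e

/-- the contraction `G/X` is matching-covered (every one of its edges, i.e. every
edge of `G` not inside `X`, lies in a perfect matching of `G/X`). -/
def MatchingCoveredContr (G : SimpleGraph V) (X : Set V) : Prop :=
  ∀ e ∈ G.edgeSet, (¬ ∀ v ∈ e, v ∈ X) → ∃ M, IsPMContr G X M ∧ e ∈ M

/-- `δ(X)` is a separating cut: odd, nontrivial, and both cut-contractions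
`G/X` and `G/X̄` are matching-covered. -/
def SeparatingCut (G : SimpleGraph V) (X : Set V) : Prop :=
  Odd X.toFinset.card ∧ 1 < X.toFinset.card ∧ X.toFinset.card < Fintype.card V - 1 ∧
    MatchingCoveredContr G X ∧ MatchingCoveredContr G Xᶜ

/-- the edges of the contraction `G/X`, as edges of `G` -/
def contrEdges (G : SimpleGraph V) (X : Set V) : Finset (Sym2 V) :=
  G.edgeFinset.filter fun e => ¬ ∀ v ∈ e, v ∈ X

/-- the perfect matching polytope of the contraction `G/X`, in the coordinates of `G` -/
def contrPolytope (G : SimpleGraph V) (X : Set V) : Set (Sym2 V → ℝ) :=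
  convexHull ℝ {x | ∃ M, IsPMContr G X M ∧ x = indVec M}

/-- number of bricks of the contraction `G/X`, via the dimension formula -/
def brickCountContr (G : SimpleGraph V) (X : Set V) : ℤ :=
  (contrEdges G X).card - ((Fintype.card V - X.toFinset.card : ℕ) + 1) + 1 -
    polyDim (contrPolytope G X)

/-- the contraction `G/X` is a Birkhoff–von Neumann graph: its perfect matching
polytope is cut out by nonnegativity, the degree equations, and `x(δ(X)) = 1`. -/
def BvNContr (G : SimpleGraph V) (X : Set V) : Prop :=
  contrPolytope G X =
    {x | (∀ e, 0 ≤ x e) ∧ (∀ e : Sym2 V, (e ∉ G.edgeSet ∨ ∀ v ∈ e, v ∈ X) → x e = 0) ∧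
      (∀ v : V, v ∉ X → edgeSum x (cutE G {v}) = 1) ∧ edgeSum x (cutE G X) = 1}

/-- the contraction `G/X` is bipartite -/
def ContrBipartite (G : SimpleGraph V) (X : Set V) : Prop :=
  ∃ (c : V → Bool) (b : Bool), ∀ u v : V, G.Adj u v → (u ∉ X ∨ v ∉ X) →
    (if u ∈ X then b else c u) ≠ (if v ∈ X then b else c v)

/-- `G` is a Birkhoff–von Neumann graph -/
def BvN (G : SimpleGraph V) : Prop :=
  pmPolytope G =
    {x | (∀ e, 0 ≤ x e) ∧ (∀ e : Sym2 V, e ∉ G.edgeSet → x e = 0) ∧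
      ∀ v : V, edgeSum x (cutE G {v}) = 1}

/-- `F` is a face of the convex set `P` -/
def IsFaceOf {E : Type*} [AddCommGroup E] [Module ℝ E] (P F : Set E) : Prop :=
  F ⊆ P ∧ Convex ℝ F ∧ ∀ x ∈ P, ∀ y ∈ P, ∀ t : ℝ, 0 < t → t < 1 →
    t • x + (1 - t) • y ∈ F → x ∈ F ∧ y ∈ F

/-- a vector is integral if all its coordinates are integers -/
def Integral (x : Sym2 V → ℝ) : Prop := ∀ e, ∃ n : ℤ, x e = (n : ℝ)

/-- the Petersen graph, as the Kneser graph `K(5,2)` -/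
def petersenGraph : SimpleGraph {s : Finset (Fin 5) // s.card = 2} where
  Adj a b := Disjoint (a : Finset (Fin 5)) (b : Finset (Fin 5))
  symm := ⟨fun _ _ h => h.symm⟩
  loopless := ⟨fun a h => by
    have h0 : (a : Finset (Fin 5)) = ∅ := by
      exact disjoint_self.mp h
    have h2 := a.2
    rw [h0] at h2
    simp at h2⟩



set_option linter.unusedSectionVars false

-- helper lemmas
lemma mem_cutE_singleton {G : SimpleGraph V} {v : V} {e : Sym2 V} :
    e ∈ cutE G {v} ↔ e ∈ G.edgeSet ∧ v ∈ e := by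
  induction e using Sym2.ind with
  | _ a b =>
    unfold cutE
    simp only [Finset.mem_filter, Finset.mem_univ, true_and, Set.mem_singleton_iff]
    constructor
    · rintro ⟨he, u, w, huw, rfl, hw⟩
      refine ⟨he, ?_⟩
      rw [huw]
      exact Sym2.mem_mk_left _ _
    · rintro ⟨he, hv⟩
      have hab : a ≠ b := (G.mem_edgeSet.mp he).ne
      refine ⟨he, ?_⟩
      rcases Sym2.mem_iff.mp hv with rfl | rfl
      · exact ⟨v, b, rfl, rfl, fun h => hab h.symm⟩
      · exact ⟨v, a, Sym2.eq_swap, rfl, fun h => hab h⟩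

lemma indVec_nonneg (M : Finset (Sym2 V)) (e : Sym2 V) : 0 ≤ indVec M e := by
  unfold indVec; split <;> norm_num

lemma pm_edgeSum_cut {G : SimpleGraph V} {M : Finset (Sym2 V)} (hM : IsPM G M) (v : V) :
    edgeSum (indVec M) (cutE G {v}) = 1 := by
  obtain ⟨e₀, he₀, huniq⟩ := hM.2 v
  have hfilter : (cutE G {v}).filter (· ∈ M) = {e₀} := by
    ext e
    simp only [Finset.mem_filter, Finset.mem_singleton, mem_cutE_singleton]
    constructor
    · rintro ⟨⟨he, hv⟩, hm⟩
      exact huniq e ⟨hm, hv⟩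
    · rintro rfl
      exact ⟨⟨hM.1 he₀.1, he₀.2⟩, he₀.1⟩
  unfold edgeSum indVec
  rw [Finset.sum_boole, hfilter]
  simp

set_option linter.unusedSectionVars false

lemma hset_eq (G : SimpleGraph V) :
    {x | ∃ M, IsPM G M ∧ x = indVec M} = indVec '' {M | IsPM G M} := by
  ext z; simp only [Set.mem_setOf_eq, Set.mem_image]
  constructor
  · rintro ⟨M, hM, rfl⟩; exact ⟨M, hM, rfl⟩
  · rintro ⟨M, hM, rfl⟩; exact ⟨M, hM, rfl⟩

lemma span_pm (G : SimpleGraph V) :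
    Submodule.span ℝ (pmPolytope G) = Submodule.span ℝ (indVec '' {M | IsPM G M}) := by
  apply le_antisymm
  · rw [Submodule.span_le]
    apply convexHull_min
    · intro z hz; obtain ⟨M, hM, rfl⟩ := hz
      exact Submodule.subset_span ⟨M, hM, rfl⟩
    · exact (Submodule.span ℝ _).convex
  · apply Submodule.span_mono
    rintro z ⟨M, hM, rfl⟩
    exact subset_convexHull ℝ _ ⟨M, hM, rfl⟩

lemma cut_const {G : SimpleGraph V} {x : Sym2 V → ℝ}
    (hx : x ∈ Submodule.span ℝ (indVec '' {M | IsPM G M})) (v w : V) :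
    edgeSum x (cutE G {v}) = edgeSum x (cutE G {w}) := by
  induction hx using Submodule.span_induction with
  | mem z hz => obtain ⟨M, hM, rfl⟩ := hz; rw [pm_edgeSum_cut hM, pm_edgeSum_cut hM]
  | zero => simp [edgeSum]
  | add a b _ _ ha hb =>
      simp only [edgeSum, Pi.add_apply, Finset.sum_add_distrib] at ha hb ⊢
      rw [ha, hb]
  | smul c a _ ha =>
      simp only [edgeSum, Pi.smul_apply, smul_eq_mul, ← Finset.mul_sum] at ha ⊢
      rw [ha]

lemma span_vanish {G : SimpleGraph V} {x : Sym2 V → ℝ}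
    (hx : x ∈ Submodule.span ℝ (indVec '' {M | IsPM G M})) {e : Sym2 V}
    (he : ∀ M, IsPM G M → e ∉ M) : x e = 0 := by
  induction hx using Submodule.span_induction with
  | mem z hz => obtain ⟨M, hM, rfl⟩ := hz; simp [indVec, he M hM]
  | zero => simp
  | add a b _ _ ha hb => simp [ha, hb]
  | smul c a _ ha => simp [ha]


lemma idp (G : SimpleGraph V) (hBvN : BvN G) :
    ∀ (m : ℕ) (y : Sym2 V → ℝ), (∀ e, ∃ n : ℕ, y e = n) → (∀ e, e ∉ G.edgeSet → y e = 0) →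
    (∀ v : V, edgeSum y (cutE G {v}) = m) →
    y ∈ Submodule.span ℤ (indVec '' {M | IsPM G M}) := by
  intro m
  induction m with
  | zero =>
    intro y hint h0 hcut
    have hy : y = 0 := by
      funext e
      show y e = 0
      by_cases he : e ∈ G.edgeSet
      · induction e using Sym2.ind with
        | _ a b =>
          have hmem : s(a,b) ∈ cutE G {a} := mem_cutE_singleton.mpr ⟨he, Sym2.mem_mk_left _ _⟩
          have hnn : ∀ f ∈ cutE G {a}, 0 ≤ y f := by
            intro f _
            obtain ⟨n, hn⟩ := hint f; rw [hn]; positivity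
          have h := (Finset.sum_eq_zero_iff_of_nonneg hnn).mp
            (by simpa [edgeSum] using hcut a) _ hmem
          exact h
      · exact h0 e he
    rw [hy]; exact Submodule.zero_mem _
  | succ m ih =>
    intro y hint h0 hcut
    have hm1 : (0:ℝ) < ((m+1 : ℕ) : ℝ) := by positivity
    set w : Sym2 V → ℝ := (((m+1 : ℕ) : ℝ))⁻¹ • y with hwdef
    have hwP : w ∈ pmPolytope G := by
      rw [hBvN]
      refine ⟨?_, ?_, ?_⟩
      · intro e; obtain ⟨n, hn⟩ := hint e
        simp only [hwdef, Pi.smul_apply, smul_eq_mul]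
        rw [hn]; positivity
      · intro e he; simp [hwdef, h0 e he]
      · intro v
        have h : edgeSum w (cutE G {v}) = (((m+1:ℕ)):ℝ)⁻¹ * edgeSum y (cutE G {v}) := by
          simp [edgeSum, hwdef, Finset.mul_sum]
        rw [h, hcut v, inv_mul_cancel₀ hm1.ne']
    have hwS : w ∈ convexHull ℝ {x | ∃ M, IsPM G M ∧ x = indVec M} := hwP
    rw [_root_.convexHull_eq] at hwS
    obtain ⟨ι, t, wt, zf, hw0, hw1, hzS, hcm⟩ := hwS
    have hsum : ∀ e, w e = ∑ i ∈ t, wt i * zf i e := by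
      intro e
      rw [← hcm, Finset.centerMass_eq_of_sum_1 _ _ hw1]
      simp
    obtain ⟨i₀, hi₀t, hi₀⟩ : ∃ i ∈ t, 0 < wt i := by
      by_contra h; push_neg at h
      have hz : ∑ i ∈ t, wt i = 0 :=
        Finset.sum_eq_zero fun i hi => le_antisymm (h i hi) (hw0 i hi)
      rw [hw1] at hz; norm_num at hz
    obtain ⟨M, hM, hzM⟩ := hzS i₀ hi₀t
    have hkey : ∀ e ∈ M, (1:ℝ) ≤ y e := by
      intro e he
      have h1 : wt i₀ ≤ w e := by
        rw [hsum e]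
        have heq : wt i₀ * zf i₀ e = wt i₀ := by rw [hzM]; simp [indVec, he]
        calc wt i₀ = wt i₀ * zf i₀ e := heq.symm
          _ ≤ ∑ i ∈ t, wt i * zf i e := by
              refine Finset.single_le_sum (f := fun i => wt i * zf i e) ?_ hi₀t
              intro i hi
              obtain ⟨M', _, hzM'⟩ := hzS i hi
              show 0 ≤ wt i * zf i e
              rw [hzM']
              exact mul_nonneg (hw0 i hi) (indVec_nonneg M' e)
      have hypos : 0 < y e := by
        have hw' : 0 < w e := lt_of_lt_of_le hi₀ h1
        have : y e = ((m+1:ℕ):ℝ) * w e := by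
          simp only [hwdef, Pi.smul_apply, smul_eq_mul]
          field_simp
        rw [this]; positivity
      obtain ⟨n, hn⟩ := hint e
      rw [hn] at hypos ⊢
      have : 1 ≤ n := by exact_mod_cast Nat.one_le_iff_ne_zero.mpr (by
        intro h; rw [h] at hypos; norm_num at hypos)
      exact_mod_cast this
    have hMedge : ∀ e ∈ M, e ∈ G.edgeSet := fun e he => hM.1 he
    have hih := ih (y - indVec M) ?_ ?_ ?_
    · have hMspan : indVec M ∈ Submodule.span ℤ (indVec '' {M | IsPM G M}) :=
        Submodule.subset_span ⟨M, hM, rfl⟩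
      have hfin : y = (y - indVec M) + indVec M := by abel
      rw [hfin]
      exact Submodule.add_mem _ hih hMspan
    · intro e
      obtain ⟨n, hn⟩ := hint e
      by_cases he : e ∈ M
      · have h1 : (1:ℝ) ≤ (n:ℝ) := hn ▸ hkey e he
        have hn1 : 1 ≤ n := by exact_mod_cast h1
        refine ⟨n - 1, ?_⟩
        simp only [Pi.sub_apply, hn, indVec, if_pos he]
        push_cast [Nat.cast_sub hn1]
        ring
      · exact ⟨n, by simp [indVec, he, hn]⟩
    · intro e he
      have : e ∉ M := fun h => he (hMedge e h)
      simp [indVec, this, h0 e he]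
    · intro v
      have h1 : edgeSum (y - indVec M) (cutE G {v}) =
          edgeSum y (cutE G {v}) - edgeSum (indVec M) (cutE G {v}) := by
        simp [edgeSum, Finset.sum_sub_distrib]
      rw [h1, hcut v, pm_edgeSum_cut hM v]
      push_cast
      ring

/-- for a Birkhoff–von Neumann matching-covered graph `G`, the lattice
generated by the incidence vectors of perfect matchings equals the set of integral
vectors in the linear hull of `P(G)`. -/
theorem stmt16 (G : SimpleGraph V) (hG : MatchingCovered G) (hBvN : BvN G) :
    (Submodule.span ℤ (indVec '' {M | IsPM G M}) : Set (Sym2 V → ℝ)) =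
      {x | x ∈ Submodule.span ℝ (pmPolytope G) ∧ Integral x} := by
  ext x
  simp only [SetLike.mem_coe, Set.mem_setOf_eq]
  constructor
  · intro hx
    induction hx using Submodule.span_induction with
    | mem z hz =>
      obtain ⟨M, hM, rfl⟩ := hz
      constructor
      · rw [span_pm]
        exact Submodule.subset_span ⟨M, hM, rfl⟩
      · intro e
        by_cases he : e ∈ M
        · exact ⟨1, by simp [indVec, he]⟩
        · exact ⟨0, by simp [indVec, he]⟩
    | zero => exact ⟨Submodule.zero_mem _, fun e => ⟨0, by simp⟩⟩
    | add a b _ _ ha hb =>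
      refine ⟨Submodule.add_mem _ ha.1 hb.1, fun e => ?_⟩
      obtain ⟨p, hp⟩ := ha.2 e; obtain ⟨q, hq⟩ := hb.2 e
      exact ⟨p + q, by simp [hp, hq]⟩
    | smul c a _ ha =>
      constructor
      · have : c • a = ((c:ℝ)) • a := (Int.cast_smul_eq_zsmul ℝ c a).symm
        rw [this]
        exact Submodule.smul_mem _ _ ha.1
      · intro e
        obtain ⟨p, hp⟩ := ha.2 e
        refine ⟨c * p, ?_⟩
        have : (c • a) e = (c:ℝ) * a e := by
          simp [zsmul_eq_mul]
        rw [this, hp]; push_cast; ring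
  · rintro ⟨hxspan, hxint⟩
    by_cases hV : IsEmpty V
    · have hSV : IsEmpty (Sym2 V) := by
        constructor; intro e
        induction e using Sym2.ind with
        | _ a b => exact hV.false a
      have hx0 : x = 0 := funext fun e => isEmptyElim e
      rw [hx0]; exact Submodule.zero_mem _
    rw [not_isEmpty_iff] at hV
    obtain ⟨v₀⟩ := hV
    by_cases hPM : ∃ M, IsPM G M
    case neg =>
      have hSe : {x | ∃ M, IsPM G M ∧ x = indVec M} = (∅ : Set (Sym2 V → ℝ)) := by
        ext z
        simp only [Set.mem_setOf_eq, Set.mem_empty_iff_false, iff_false, not_exists]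
        rintro M ⟨hM, _⟩; exact hPM ⟨M, hM⟩
      have hP : pmPolytope G = ∅ := by rw [pmPolytope, hSe, convexHull_empty]
      rw [hP] at hxspan
      rw [Submodule.span_empty, Submodule.mem_bot] at hxspan
      rw [hxspan]; exact Submodule.zero_mem _
    obtain ⟨M₀, hM₀⟩ := hPM
    set 𝓜 : Finset (Finset (Sym2 V)) := Finset.univ.filter (fun M => IsPM G M) with h𝓜
    have h𝓜mem : ∀ M, M ∈ 𝓜 ↔ IsPM G M := by
      intro M; simp [h𝓜]
    have hM₀mem : M₀ ∈ 𝓜 := (h𝓜mem M₀).mpr hM₀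
    set z : Sym2 V → ℝ := ∑ M ∈ 𝓜, indVec M with hz
    choose n hn using hxint
    have hxS : x ∈ Submodule.span ℝ (indVec '' {M | IsPM G M}) := by
      rw [← span_pm]; exact hxspan
    set κ : ℤ := ∑ e ∈ cutE G {v₀}, n e with hκ
    have hkval : edgeSum x (cutE G {v₀}) = (κ : ℝ) := by
      rw [edgeSum, hκ]
      push_cast
      exact Finset.sum_congr rfl fun e _ => hn e
    set N : ℕ := (Finset.univ.sup fun e : Sym2 V => (n e).natAbs) + κ.natAbs with hN
    have hNe : ∀ e, -(N:ℤ) ≤ n e := by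
      intro e
      have h1 : (n e).natAbs ≤ N := by
        rw [hN]
        exact le_trans (Finset.le_sup (f := fun e : Sym2 V => (n e).natAbs) (Finset.mem_univ e)) (Nat.le_add_right _ _)
      omega
    have hNκ : -(N:ℤ) ≤ κ := by
      have h1 : κ.natAbs ≤ N := by rw [hN]; exact Nat.le_add_left _ _
      omega
    set c : ℕ := 𝓜.card with hc
    have hc1 : 1 ≤ c := Finset.card_pos.mpr ⟨M₀, hM₀mem⟩
    set y : Sym2 V → ℝ := x + (N : ℝ) • z with hy
    have hze : ∀ e, z e = (((𝓜.filter fun M => e ∈ M).card : ℕ) : ℝ) := by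
      intro e
      rw [hz, Finset.sum_apply]
      simp only [indVec]
      rw [Finset.sum_boole]
    have hyint : ∀ e, ∃ k : ℕ, y e = k := by
      intro e
      by_cases hcase : ∃ M ∈ 𝓜, e ∈ M
      · obtain ⟨M, hMm, heM⟩ := hcase
        set ct : ℕ := (𝓜.filter fun M => e ∈ M).card with hct
        have ht1 : 1 ≤ ct :=
          Finset.card_pos.mpr ⟨M, Finset.mem_filter.mpr ⟨hMm, heM⟩⟩
        refine ⟨(n e + (N:ℤ) * ct).toNat, ?_⟩
        have hnonneg : 0 ≤ n e + (N:ℤ) * ct := by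
          have h1 := hNe e
          have h2 : (N:ℤ) * 1 ≤ (N:ℤ) * ct := by
            apply mul_le_mul_of_nonneg_left _ (by positivity)
            exact_mod_cast ht1
          omega
        have hth : y e = x e + (N:ℝ) * z e := by simp [hy]
        rw [hth, hn e, hze e, ← hct]
        exact_mod_cast (Int.toNat_of_nonneg hnonneg).symm
      · push_neg at hcase
        have hz0 : z e = 0 := by
          rw [hze]
          have : (𝓜.filter fun M => e ∈ M) = ∅ := by
            apply Finset.filter_eq_empty_iff.mpr
            intro M hM; exact hcase M hM
          rw [this]; simp
        have hx0 : x e = 0 := span_vanish hxS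
          (fun M hM hmem => hcase M ((h𝓜mem M).mpr hM) hmem)
        exact ⟨0, by simp [hy, hz0, hx0]⟩
    have hy0 : ∀ e, e ∉ G.edgeSet → y e = 0 := by
      intro e he
      have hx0 : x e = 0 := span_vanish hxS (fun M hM hmem => he (hM.1 hmem))
      have hz0 : z e = 0 := by
        rw [hze]
        have : (𝓜.filter fun M => e ∈ M) = ∅ := by
          apply Finset.filter_eq_empty_iff.mpr
          intro M hM hmem
          exact he (((h𝓜mem M).mp hM).1 hmem)
        rw [this]; simp
      simp [hy, hx0, hz0]
    set m : ℕ := (κ + (N:ℤ) * c).toNat with hm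
    have hmnn : 0 ≤ κ + (N:ℤ) * c := by
      have h2 : (N:ℤ) * 1 ≤ (N:ℤ) * c := by
        apply mul_le_mul_of_nonneg_left _ (by positivity)
        exact_mod_cast hc1
      omega
    have hycut : ∀ v, edgeSum y (cutE G {v}) = (m : ℝ) := by
      intro v
      have h1 : edgeSum z (cutE G {v}) = (c : ℝ) := by
        rw [hz]
        have : edgeSum (∑ M ∈ 𝓜, indVec M) (cutE G {v}) =
            ∑ M ∈ 𝓜, edgeSum (indVec M) (cutE G {v}) := by
          unfold edgeSum
          rw [Finset.sum_comm]
          congr 1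
          ext e
          simp [Finset.sum_apply]
        rw [this]
        rw [Finset.sum_congr rfl (fun M hM => pm_edgeSum_cut ((h𝓜mem M).mp hM) v)]
        simp [hc]
      have h2 : edgeSum x (cutE G {v}) = (κ:ℝ) := (cut_const hxS v v₀).trans hkval
      have h3 : edgeSum y (cutE G {v}) =
          edgeSum x (cutE G {v}) + (N:ℝ) * edgeSum z (cutE G {v}) := by
        simp [edgeSum, hy, Finset.sum_add_distrib, Finset.mul_sum]
      rw [h3, h1, h2, hm]
      exact_mod_cast (Int.toNat_of_nonneg hmnn).symm
    have hymem := idp G hBvN m y hyint hy0 hycut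
    have hzmem : z ∈ Submodule.span ℤ (indVec '' {M | IsPM G M}) := by
      rw [hz]
      exact Submodule.sum_mem _ fun M hM =>
        Submodule.subset_span ⟨M, (h𝓜mem M).mp hM, rfl⟩
    have hxy : x = y - ((N:ℤ)) • z := by
      have hcast : ((N:ℤ)) • z = (((N:ℤ)):ℝ) • z := (Int.cast_smul_eq_zsmul ℝ (N:ℤ) z).symm
      rw [hcast, hy]
      push_cast
      abel
    rw [hxy]
    exact Submodule.sub_mem _ hymem (Submodule.smul_mem _ _ hzmem)



end PaperPM
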